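/- Let v : [0,1] → ℝ be 1-Lipschitz and nonnegative, let D ∈ ℕ with D ≥ 2, and for t = 1, …, D set B_t = v^{-1}((2^{-t}, 2^{-(t-1)}]). Assume that B_{D−1} ∪ B_D is a union of at most two intervals, each of Lebesgue measure at least 2^{-D}. Then for every r with 2^{-D} ≤ r ≤ 2^{-(D-1)}, there exist n ∈ ℕ and sets U_1, …, U_n ⊆ ℝ, each of diameter at most r, such that v^{-1}((r, 2r]) ⊆ U_1 ∪ ⋯ ∪ U_n and n ≤ 32 · 4^{-D} · Σ_{t=1}^{D} 8^t m(B_t). -/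

import Mathlib

open MeasureTheory

lemma cover_Icc_aux (a b r : ℝ) (hr : 0 < r) (n : ℕ) (hn : 1 ≤ n) (h : b - a ≤ n * r) :
    Set.Icc a b ⊆ ⋃ i : Fin n, Set.Icc (a + (i : ℕ) * r) (a + (i : ℕ) * r + r) := by
  intro x hx
  have hxa : 0 ≤ x - a := by linarith [hx.1]
  set k0 := ⌊(x - a) / r⌋₊ with hk0
  have hfl : (k0 : ℝ) * r ≤ x - a := by
    have := Nat.floor_le (show (0:ℝ) ≤ (x - a) / r by positivity)
    calc (k0 : ℝ) * r ≤ ((x - a)/r) * r := by nlinarith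
      _ = x - a := by field_simp
  by_cases hc : k0 ≤ n - 1
  · have hfl' : x - a < ((k0 : ℝ) + 1) * r := by
      have := Nat.lt_floor_add_one ((x - a) / r)
      calc x - a = ((x-a)/r) * r := by field_simp
        _ < ((k0:ℝ)+1) * r := by nlinarith
    refine Set.mem_iUnion.2 ⟨⟨k0, by omega⟩, ?_, ?_⟩ <;> simp only [] <;> nlinarith
  · have hcast : ((n - 1 : ℕ) : ℝ) = (n : ℝ) - 1 := by
      push_cast [Nat.cast_sub hn]; ring
    have hk : ((n - 1 : ℕ) : ℝ) ≤ (k0 : ℝ) := by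
      have : n - 1 ≤ k0 := by omega
      exact_mod_cast this
    refine Set.mem_iUnion.2 ⟨⟨n - 1, by omega⟩, ?_, ?_⟩ <;> simp only []
    · nlinarith
    · have : x ≤ b := hx.2
      rw [hcast]; nlinarith

lemma cover_ordConnected (S : Set ℝ) (hS : S.OrdConnected) (hsub : S ⊆ Set.Icc (0:ℝ) 1)
    (p r : ℝ) (hp : 0 < p) (hvol : ENNReal.ofReal p ≤ volume S)
    (hpr : p ≤ r) (hr2 : r ≤ 2 * p) :
    ∃ (n : ℕ) (U : Fin n → Set ℝ),
      (∀ i, EMetric.diam (U i) ≤ ENNReal.ofReal r) ∧ S ⊆ ⋃ i, U i ∧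
      (n : ℝ) ≤ 2 * (volume S).toReal / r := by
  have hr : 0 < r := lt_of_lt_of_le hp hpr
  have hne : S.Nonempty := by
    rcases S.eq_empty_or_nonempty with h | h
    · exfalso
      rw [h, measure_empty] at hvol
      simp [ENNReal.ofReal_pos, hp] at hvol
      linarith
    · exact h
  have hbb : BddBelow S := (bddBelow_Icc).mono hsub
  have hba : BddAbove S := (bddAbove_Icc).mono hsub
  set a := sInf S with ha
  set b := sSup S with hb
  have hScc : S ⊆ Set.Icc a b := fun x hx => ⟨csInf_le hbb hx, le_csSup hba hx⟩
  have hab : a ≤ b := by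
    obtain ⟨x, hx⟩ := hne
    exact le_trans (csInf_le hbb hx) (le_csSup hba hx)
  have hIoo : Set.Ioo a b ⊆ S := by
    intro y hy
    obtain ⟨z, hzS, hz⟩ := exists_lt_of_csInf_lt hne hy.1
    obtain ⟨w, hwS, hw⟩ := exists_lt_of_lt_csSup hne hy.2
    exact hS.out hzS hwS ⟨le_of_lt hz, le_of_lt hw⟩
  have hfin : volume S ≠ ⊤ := by
    refine ne_top_of_le_ne_top ?_ (measure_mono hsub)
    simp [Real.volume_Icc]
  have hd_le : b - a ≤ (volume S).toReal := by
    have h1 : ENNReal.ofReal (b - a) ≤ volume S := by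
      rw [← Real.volume_Ioo]
      exact measure_mono hIoo
    exact (ENNReal.ofReal_le_iff_le_toReal hfin).mp h1
  have hd_ge : p ≤ b - a := by
    have h1 : volume S ≤ ENNReal.ofReal (b - a) := by
      rw [← Real.volume_Icc]
      exact measure_mono hScc
    have := le_trans hvol h1
    exact (ENNReal.ofReal_le_ofReal_iff (by linarith)).mp this
  set n := ⌈(b - a) / r⌉₊ with hn
  have hx2 : (1:ℝ)/2 ≤ (b - a) / r := by
    rw [div_le_div_iff₀ (by norm_num) hr]
    linarith
  have hn1 : 1 ≤ n := Nat.ceil_pos.mpr (by positivity)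
  have hcov : b - a ≤ n * r := by
    have := Nat.le_ceil ((b - a) / r)
    calc b - a = ((b-a)/r) * r := by field_simp
      _ ≤ (n : ℝ) * r := by nlinarith
  refine ⟨n, fun i => Set.Icc (a + (i:ℕ) * r) (a + (i:ℕ) * r + r), ?_, ?_, ?_⟩
  · intro i
    show Metric.ediam (Set.Icc _ _) ≤ _
    rw [Real.ediam_Icc]
    apply le_of_eq
    ring_nf
  · exact hScc.trans (cover_Icc_aux a b r hr n hn1 hcov)
  · have hceil : (n : ℝ) ≤ 2 * ((b - a) / r) := by
      set x := (b - a) / r with hxdef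
      by_cases hx1 : x ≤ 1
      · have : n ≤ 1 := Nat.ceil_le.mpr (by simpa using hx1)
        have : (n : ℝ) ≤ 1 := by exact_mod_cast this
        linarith
      · push_neg at hx1
        have := Nat.ceil_lt_add_one (show (0:ℝ) ≤ x by linarith)
        linarith
    calc (n:ℝ) ≤ 2 * ((b-a)/r) := hceil
      _ ≤ 2 * (volume S).toReal / r := by
          rw [mul_div_assoc]
          gcongr

theorem stmt_5 (v : ℝ → ℝ)
    (hv : ∀ x ∈ Set.Icc (0:ℝ) 1, ∀ y ∈ Set.Icc (0:ℝ) 1, |v x - v y| ≤ |x - y|)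
    (hvpos : ∀ x ∈ Set.Icc (0:ℝ) 1, 0 ≤ v x)
    (D : ℕ) (hD : 2 ≤ D)
    (B : ℕ → Set ℝ)
    (hB : ∀ t : ℕ, B t =
      {x ∈ Set.Icc (0:ℝ) 1 | v x ∈ Set.Ioc ((2:ℝ) ^ (-(t:ℤ))) ((2:ℝ) ^ (-(t:ℤ) + 1))})
    (htwo : ∃ I J : Set ℝ, I.OrdConnected ∧ J.OrdConnected ∧
      B (D - 1) ∪ B D = I ∪ J ∧
      ENNReal.ofReal ((2:ℝ) ^ (-(D:ℤ))) ≤ volume I ∧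
      ENNReal.ofReal ((2:ℝ) ^ (-(D:ℤ))) ≤ volume J) :
    ∀ r : ℝ, (2:ℝ) ^ (-(D:ℤ)) ≤ r → r ≤ (2:ℝ) ^ (-(D:ℤ) + 1) →
      ∃ (n : ℕ) (U : Fin n → Set ℝ),
        (∀ i, EMetric.diam (U i) ≤ ENNReal.ofReal r) ∧
        {x ∈ Set.Icc (0:ℝ) 1 | v x ∈ Set.Ioc r (2 * r)} ⊆ ⋃ i, U i ∧
        (n : ℝ) ≤ 32 * (4:ℝ) ^ (-(D:ℤ)) *
          ∑ t ∈ Finset.Icc 1 D, 8 ^ t * (volume (B t)).toReal := by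
  intro r hr1 hr2
  obtain ⟨I, J, hIc, hJc, hIJ, hmI, hmJ⟩ := htwo
  set p := (2:ℝ) ^ (-(D:ℤ)) with hpdef
  have hp : 0 < p := by positivity
  have h2p : (2:ℝ) ^ (-(D:ℤ)+1) = 2 * p := by
    rw [zpow_add₀ (two_ne_zero) _ 1, zpow_one]; ring
  rw [h2p] at hr2
  have hr0 : 0 < r := lt_of_lt_of_le hp hr1
  -- subsets of [0,1]
  have hBsub : ∀ t, B t ⊆ Set.Icc (0:ℝ) 1 := fun t => by rw [hB t]; exact Set.sep_subset _ _
  have hIJsub : I ∪ J ⊆ Set.Icc (0:ℝ) 1 := by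
    rw [← hIJ]; exact Set.union_subset (hBsub _) (hBsub _)
  have hIsub : I ⊆ Set.Icc (0:ℝ) 1 := (Set.subset_union_left).trans hIJsub
  have hJsub : J ⊆ Set.Icc (0:ℝ) 1 := (Set.subset_union_right).trans hIJsub
  -- cast facts for D - 1
  have hcast : (((D - 1 : ℕ)) : ℤ) = (D : ℤ) - 1 := by
    have h1 : 1 ≤ D := by omega
    push_cast [h1]; ring
  have hBD1lo : (2:ℝ) ^ (-(((D-1:ℕ)):ℤ)) = 2 * p := by
    rw [hcast, hpdef, show -((D:ℤ) - 1) = -(D:ℤ) + 1 by ring,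
      zpow_add₀ (two_ne_zero : (2:ℝ) ≠ 0), zpow_one]
    ring
  have hBD1hi : (2:ℝ) ^ (-(((D-1:ℕ)):ℤ) + 1) = 4 * p := by
    rw [zpow_add₀ (two_ne_zero : (2:ℝ) ≠ 0), zpow_one, hBD1lo]; ring
  -- level set inside I ∪ J
  have hlev : {x ∈ Set.Icc (0:ℝ) 1 | v x ∈ Set.Ioc r (2*r)} ⊆ I ∪ J := by
    rw [← hIJ]
    rintro x ⟨hx, hv1, hv2⟩
    by_cases hcase : v x ≤ 2 * p
    · right
      rw [hB D]
      exact ⟨hx, lt_of_le_of_lt hr1 hv1, by rw [h2p]; exact hcase⟩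
    · left
      rw [hB (D-1)]
      push_neg at hcase
      exact ⟨hx, by rw [hBD1lo]; exact hcase, by rw [hBD1hi]; linarith⟩
  -- covers of I and J
  obtain ⟨n1, U1, hU1d, hU1c, hU1n⟩ := cover_ordConnected I hIc hIsub p r hp hmI hr1 hr2
  obtain ⟨n2, U2, hU2d, hU2c, hU2n⟩ := cover_ordConnected J hJc hJsub p r hp hmJ hr1 hr2
  refine ⟨n1 + n2, Fin.append U1 U2, ?_, ?_, ?_⟩
  · intro i
    refine Fin.addCases (fun j => ?_) (fun j => ?_) i
    · rw [Fin.append_left]; exact hU1d j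
    · rw [Fin.append_right]; exact hU2d j
  · intro x hx
    rcases hlev hx with hxI | hxJ
    · obtain ⟨i, hi⟩ := Set.mem_iUnion.mp (hU1c hxI)
      exact Set.mem_iUnion.2 ⟨Fin.castAdd n2 i, by rw [Fin.append_left]; exact hi⟩
    · obtain ⟨i, hi⟩ := Set.mem_iUnion.mp (hU2c hxJ)
      exact Set.mem_iUnion.2 ⟨Fin.natAdd n1 i, by rw [Fin.append_right]; exact hi⟩
  · -- the counting bound
    set s1 := (volume (B (D-1))).toReal with hs1def
    set s2 := (volume (B D)).toReal with hs2def
    have hs1 : 0 ≤ s1 := ENNReal.toReal_nonneg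
    have hs2 : 0 ≤ s2 := ENNReal.toReal_nonneg
    have hfin : volume (B (D-1)) + volume (B D) ≠ ⊤ := by
      have h1 : volume (B (D-1)) ≤ 1 := by
        calc volume (B (D-1)) ≤ volume (Set.Icc (0:ℝ) 1) :=
              measure_mono (hBsub _)
          _ = 1 := by simp [Real.volume_Icc]
      have h2 : volume (B D) ≤ 1 := by
        calc volume (B D) ≤ volume (Set.Icc (0:ℝ) 1) := measure_mono (hBsub _)
          _ = 1 := by simp [Real.volume_Icc]
      exact ne_top_of_le_ne_top (by norm_num) (add_le_add h1 h2)
    have hmIle : (volume I).toReal ≤ s1 + s2 := by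
      have h1 : volume I ≤ volume (B (D-1)) + volume (B D) := by
        calc volume I ≤ volume (I ∪ J) := measure_mono Set.subset_union_left
          _ = volume (B (D-1) ∪ B D) := by rw [hIJ]
          _ ≤ volume (B (D-1)) + volume (B D) := measure_union_le _ _
      have := ENNReal.toReal_mono hfin h1
      rwa [ENNReal.toReal_add (ne_top_of_le_ne_top hfin le_self_add)
        (ne_top_of_le_ne_top hfin le_add_self)] at this
    have hmJle : (volume J).toReal ≤ s1 + s2 := by
      have h1 : volume J ≤ volume (B (D-1)) + volume (B D) := by
        calc volume J ≤ volume (I ∪ J) := measure_mono Set.subset_union_right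
          _ = volume (B (D-1) ∪ B D) := by rw [hIJ]
          _ ≤ volume (B (D-1)) + volume (B D) := measure_union_le _ _
      have := ENNReal.toReal_mono hfin h1
      rwa [ENNReal.toReal_add (ne_top_of_le_ne_top hfin le_self_add)
        (ne_top_of_le_ne_top hfin le_add_self)] at this
    set E2 := (2:ℝ)^D with hE2def
    have hE2 : 0 < E2 := by positivity
    have hpE2 : p * E2 = 1 := by
      rw [hpdef, hE2def, ← zpow_natCast (2:ℝ) D, ← zpow_add₀ (two_ne_zero : (2:ℝ) ≠ 0)]
      simp
    have hrinv : 1 / r ≤ E2 := by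
      rw [div_le_iff₀ hr0]
      nlinarith
    have hn4 : ((n1 + n2 : ℕ) : ℝ) ≤ 4 * (s1 + s2) * E2 := by
      have hm1 : 2 * (volume I).toReal / r ≤ 2 * (s1 + s2) / r := by gcongr
      have hm2 : 2 * (volume J).toReal / r ≤ 2 * (s1 + s2) / r := by gcongr
      have hq : 2 * (s1 + s2) / r ≤ 2 * (s1 + s2) * E2 := by
        rw [div_eq_mul_one_div]
        exact mul_le_mul_of_nonneg_left hrinv (by positivity)
      push_cast
      linarith [hU1n, hU2n]
    set A := (4:ℝ)^(-(D:ℤ)) with hAdef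
    have hA : 0 < A := by positivity
    have h4D : A * 4^D = 1 := by
      rw [hAdef, ← zpow_natCast (4:ℝ) D, ← zpow_add₀ (by norm_num : (4:ℝ) ≠ 0)]
      simp
    have h8D : (8:ℝ)^D = 4^D * 2^D := by rw [← mul_pow]; norm_num
    have h8D1 : (8:ℝ)^(D-1) * 8 = 8^D := by
      rw [← pow_succ]; congr 1; omega
    have k2 : 32 * A * (8:ℝ)^D = 32 * E2 := by
      calc 32 * A * (8:ℝ)^D = 32 * (A * 4^D) * E2 := by rw [h8D, hE2def]; ring
        _ = 32 * E2 := by rw [h4D]; ring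
    have k1 : 32 * A * (8:ℝ)^(D-1) = 4 * E2 := by
      have h8 : (8:ℝ) * (32 * A * 8^(D-1)) = 8 * (4 * E2) := by
        calc (8:ℝ) * (32 * A * 8^(D-1)) = 32 * A * (8^(D-1) * 8) := by ring
          _ = 32 * A * 8^D := by rw [h8D1]
          _ = 32 * E2 := k2
          _ = 8 * (4 * E2) := by ring
      linarith
    have hsum : (8:ℝ)^(D-1) * s1 + 8^D * s2 ≤
        ∑ t ∈ Finset.Icc 1 D, 8 ^ t * (volume (B t)).toReal := by
      have hpair : ({D-1, D} : Finset ℕ) ⊆ Finset.Icc 1 D := by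
        intro t ht
        simp only [Finset.mem_insert, Finset.mem_singleton] at ht
        rcases ht with h | h <;> simp [Finset.mem_Icc] <;> omega
      have hne : D - 1 ≠ D := by omega
      calc (8:ℝ)^(D-1) * s1 + 8^D * s2
          = ∑ t ∈ ({D-1, D} : Finset ℕ), 8 ^ t * (volume (B t)).toReal := by
            rw [Finset.sum_pair hne]
        _ ≤ _ := Finset.sum_le_sum_of_subset_of_nonneg hpair
            (fun t _ _ => by positivity)
    calc ((n1 + n2 : ℕ) : ℝ) ≤ 4 * (s1 + s2) * E2 := hn4
      _ ≤ (32 * A * 8^(D-1)) * s1 + (32 * A * 8^D) * s2 := by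
          rw [k1, k2]; nlinarith
      _ = 32 * A * (8^(D-1) * s1 + 8^D * s2) := by ring
      _ ≤ 32 * A * ∑ t ∈ Finset.Icc 1 D, 8 ^ t * (volume (B t)).toReal := by
          have := mul_le_mul_of_nonneg_left hsum (show (0:ℝ) ≤ 32 * A by positivity)
          linarith
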